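/- Let κ > 0, T > 0, t ∈ [0,T], τ = T - t, θ > 0, σ² ≥ 0, φ(s) = (1 - e^{-κ(T-s)})/κ, m(s) = θ + (σ² - θ)e^{-κ(s-t)}. Then ν² ∫_t^T m(u) (∫_u^T e^{-κ(z-u)} φ(z) dz) du = (ν²/(2κ³)) { 2[σ² + θ(κτ - 3)] + e^{-κτ}[ θ(κ²τ² + 4κτ + 6) - σ²(κ²τ² + 2κτ + 2) ] }. -/

import Mathlib

lemma expShift_hasDerivAt (a b x : ℝ) :
    HasDerivAt (fun y => Real.exp (a * (y - b))) (a * Real.exp (a * (x - b))) x := by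
  have h := (((hasDerivAt_id x).sub_const b).const_mul a).exp
  simpa [mul_comm] using h

lemma expShift_hasDerivAt' (a b x : ℝ) :
    HasDerivAt (fun y => Real.exp (a * (b - y))) (-a * Real.exp (a * (b - x))) x := by
  have h := ((((hasDerivAt_id x).neg.add_const b)).const_mul a).exp
  simpa [mul_comm, sub_eq_neg_add] using h

theorem L_W_LWM_closed_form
    (κ T t τ θ σsq ν : ℝ) (hκ : 0 < κ) (hT : 0 < T) (ht : t ∈ Set.Icc (0:ℝ) T)
    (hτ : τ = T - t) (hθ : 0 < θ) (hσ : 0 ≤ σsq) (hν : 0 < ν)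
    (φ : ℝ → ℝ) (hφ : ∀ s, φ s = (1 - Real.exp (-κ * (T - s))) / κ)
    (m : ℝ → ℝ) (hm : ∀ s, m s = θ + (σsq - θ) * Real.exp (-κ * (s - t))) :
    ν ^ 2 * ∫ u in t..T, m u * ∫ z in u..T, Real.exp (-κ * (z - u)) * φ z =
      (ν ^ 2 / (2 * κ ^ 3)) *
        (2 * (σsq + θ * (κ * τ - 3)) +
          Real.exp (-κ * τ) *
            (θ * (κ ^ 2 * τ ^ 2 + 4 * κ * τ + 6) -
             σsq * (κ ^ 2 * τ ^ 2 + 2 * κ * τ + 2))) := by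
  subst hτ
  have hκ' : κ ≠ 0 := hκ.ne'
  -- inner integral closed form
  have hinner : ∀ u : ℝ, (∫ z in u..T, Real.exp (-κ * (z - u)) * φ z)
      = (1 - Real.exp (-κ * (T - u)) - κ * (T - u) * Real.exp (-κ * (T - u))) / κ ^ 2 := by
    intro u
    have key : ∀ z : ℝ, HasDerivAt
        (fun z => (-Real.exp (-κ * (z - u)) / κ - z * Real.exp (-κ * (T - u))) / κ)
        (Real.exp (-κ * (z - u)) * φ z) z := by
      intro z
      have h1 := (expShift_hasDerivAt (-κ) u z).div_const κ |>.neg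
      have h2 := (hasDerivAt_id z).mul_const (Real.exp (-κ * (T - u)))
      have h3 := (h1.sub h2).div_const κ
      convert h3 using 1
      · rfl
      · rfl
      · funext x; simp only [id_eq, Pi.neg_apply, Pi.sub_apply, Pi.add_apply, Pi.mul_apply, Pi.pow_apply]; ring
      · have hmul : Real.exp (-κ * (z - u)) * Real.exp (-κ * (T - z))
            = Real.exp (-κ * (T - u)) := by
          rw [← Real.exp_add]; ring_nf
        rw [hφ, ← hmul]
        field_simp
    have hcont : IntervalIntegrable (fun z => Real.exp (-κ * (z - u)) * φ z)
        MeasureTheory.volume u T := by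
      apply Continuous.intervalIntegrable
      have : (fun z => Real.exp (-κ * (z - u)) * φ z)
          = fun z => Real.exp (-κ * (z - u)) * ((1 - Real.exp (-κ * (T - z))) / κ) := by
        funext z; rw [hφ]
      rw [this]; fun_prop
    rw [intervalIntegral.integral_eq_sub_of_hasDerivAt (fun z _ => key z) hcont]
    rw [sub_self, mul_zero, Real.exp_zero]
    field_simp
    ring
  -- outer integral via FTC
  set c := σsq - θ with hc
  have key2 : ∀ u : ℝ, HasDerivAt
      (fun u => (θ * u - 2 * θ * Real.exp (-κ * (T - u)) / κ
          - θ * (T - u) * Real.exp (-κ * (T - u))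
          - c * Real.exp (-κ * (u - t)) / κ
          - c * Real.exp (-κ * (T - t)) * u
          + (c * κ / 2) * Real.exp (-κ * (T - t)) * (T - u) ^ 2) / κ ^ 2)
      (m u * ((1 - Real.exp (-κ * (T - u)) - κ * (T - u) * Real.exp (-κ * (T - u))) / κ ^ 2)) u := by
    intro u
    have e1 := expShift_hasDerivAt' (-κ) T u  -- deriv of exp(-κ(T-u)) is κ exp(-κ(T-u))
    have e2 := expShift_hasDerivAt (-κ) t u   -- deriv of exp(-κ(u-t)) is -κ exp(-κ(u-t))
    have d1 := (hasDerivAt_id u).const_mul θ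
    have d2 := (e1.const_mul (2 * θ)).div_const κ
    have d3 := (((hasDerivAt_id u).neg.add_const T).const_mul θ).mul e1
    have d4 := (e2.const_mul c).div_const κ
    have d5 := (hasDerivAt_id u).const_mul (c * Real.exp (-κ * (T - t)))
    have d6 := (((hasDerivAt_id u).neg.add_const T).pow 2).const_mul
        ((c * κ / 2) * Real.exp (-κ * (T - t)))
    have D := (((((d1.sub d2).sub d3).sub d4).sub d5).add d6).div_const (κ ^ 2)
    convert D using 1
    · rfl
    · rfl
    · funext y; simp only [id_eq, Pi.neg_apply, Pi.sub_apply, Pi.add_apply, Pi.mul_apply, Pi.pow_apply]; ring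
    · simp only [id_eq, Pi.neg_apply, Pi.sub_apply, Pi.add_apply, Pi.mul_apply, Pi.pow_apply]
      have hmul : Real.exp (-κ * (u - t)) * Real.exp (-κ * (T - u))
          = Real.exp (-κ * (T - t)) := by
        rw [← Real.exp_add]; ring_nf
      rw [hm, hc, ← hmul]
      field_simp
      ring
  have hcont2 : IntervalIntegrable
      (fun u => m u * ((1 - Real.exp (-κ * (T - u)) - κ * (T - u) * Real.exp (-κ * (T - u))) / κ ^ 2))
      MeasureTheory.volume t T := by
    apply Continuous.intervalIntegrable
    have : m = fun s => θ + (σsq - θ) * Real.exp (-κ * (s - t)) := funext hm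
    rw [this]; fun_prop
  have houter : (∫ u in t..T, m u * ∫ z in u..T, Real.exp (-κ * (z - u)) * φ z)
      = ∫ u in t..T, m u * ((1 - Real.exp (-κ * (T - u)) - κ * (T - u) * Real.exp (-κ * (T - u))) / κ ^ 2) := by
    apply intervalIntegral.integral_congr
    intro u _
    dsimp only
    rw [hinner u]
  rw [houter, intervalIntegral.integral_eq_sub_of_hasDerivAt (fun u _ => key2 u) hcont2]
  rw [sub_self, mul_zero, Real.exp_zero]
  simp only [hc, sub_self, mul_zero, Real.exp_zero]
  field_simp
  ring
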